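/- Suppose σ̃_A < σ̃_B. Let θ̃ be the unique real number satisfying p_A·(1 − Φ((θ̃ − μ_A)/σ̃_A)) + p_B·(1 − Φ((θ̃ − μ_B)/σ̃_B)) = α, and set x_A := 1 − Φ((θ̃ − μ_A)/σ̃_A) and x_B := 1 − Φ((θ̃ − μ_B)/σ̃_B) (the Bayesian-optimal selection rates). Then x_A < x_B if and only if α < Φ(Δμ/Δσ̃). -/

import Mathlib

noncomputable def gpdf (t : ℝ) : ℝ := Real.exp (-t ^ 2 / 2) / Real.sqrt (2 * Real.pi)

noncomputable def gcdf (x : ℝ) : ℝ := ∫ t in Set.Iic x, gpdf t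

noncomputable def gquant : ℝ → ℝ := Function.invFun gcdf

noncomputable def sHat (η σ : ℝ) : ℝ := Real.sqrt (η ^ 2 + σ ^ 2)

noncomputable def sTil (η σ : ℝ) : ℝ := η ^ 2 / sHat η σ

def Dset (pA α : ℝ) : Set ℝ :=
  {x | x ∈ Set.Ioo (0:ℝ) 1 ∧ (α - pA * x) / (1 - pA) ∈ Set.Ioo (0:ℝ) 1}

noncomputable def Qfun (pA α μA μB sA sB x : ℝ) : ℝ :=
  (1 / α) * (pA * (μA * x + sA * gpdf (gquant (1 - x)))
    + (1 - pA) * (μB * ((α - pA * x) / (1 - pA))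
      + sB * gpdf (gquant (1 - (α - pA * x) / (1 - pA)))))

noncomputable def clampTo (lo hi x : ℝ) : ℝ := min hi (max lo x)


lemma gpdf_pos (t : ℝ) : 0 < gpdf t :=
  div_pos (Real.exp_pos _) (Real.sqrt_pos.2 (by positivity))

lemma gpdf_eq : gpdf = fun t => Real.exp (-(1/2) * t ^ 2) / Real.sqrt (2 * Real.pi) := by
  funext t; unfold gpdf; rw [show -t^2/2 = -(1/2)*t^2 by ring]

lemma gpdf_integrable : MeasureTheory.Integrable gpdf := by
  rw [gpdf_eq]
  exact (integrable_exp_neg_mul_sq (by norm_num)).div_const _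

lemma gpdf_total : ∫ t, gpdf t = 1 := by
  rw [gpdf_eq]
  rw [MeasureTheory.integral_div, integral_gaussian]
  rw [show Real.pi / (1/2) = 2 * Real.pi by ring]
  exact div_self (by positivity)

lemma gcdf_strictMono : StrictMono gcdf := by
  intro x y hxy
  have h : gcdf y - gcdf x = ∫ t in x..y, gpdf t :=
    intervalIntegral.integral_Iic_sub_Iic gpdf_integrable.integrableOn
      gpdf_integrable.integrableOn
  have hpos : 0 < ∫ t in x..y, gpdf t :=
    intervalIntegral.intervalIntegral_pos_of_pos
      (gpdf_integrable.intervalIntegrable) gpdf_pos hxy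
  linarith

lemma gpdf_neg (t : ℝ) : gpdf (-t) = gpdf t := by
  unfold gpdf; rw [neg_sq]

lemma gcdf_neg (x : ℝ) : gcdf (-x) = 1 - gcdf x := by
  have h1 : gcdf (-x) = ∫ t in Set.Ioi x, gpdf t := by
    rw [show (∫ t in Set.Ioi x, gpdf t) = ∫ t in Set.Ioi x, gpdf (-t) from by
      simp only [gpdf_neg]]
    rw [integral_comp_neg_Ioi]
    rfl
  have h2 : gcdf x + ∫ t in Set.Ioi x, gpdf t = 1 := by
    rw [show (1:ℝ) = ∫ t, gpdf t from gpdf_total.symm]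
    exact intervalIntegral.integral_Iic_add_Ioi gpdf_integrable.integrableOn
      gpdf_integrable.integrableOn
  linarith

lemma sTil_pos {η σ : ℝ} (hη : 0 < η) (hσ : 0 < σ) : 0 < sTil η σ := by
  unfold sTil sHat
  positivity


/-- the Bayesian-optimal algorithm underrepresents group `A`
(with smaller posterior variance `σ̃_A < σ̃_B`) exactly for budgets `α < Φ(Δμ/Δσ̃)`. -/
theorem stmt1 (pA α μA μB ηA ηB σA σB θt : ℝ)
    (hpA : pA ∈ Set.Ioo (0:ℝ) 1) (hα : α ∈ Set.Ioo (0:ℝ) 1)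
    (hηA : 0 < ηA) (hηB : 0 < ηB) (hσA : 0 < σA) (hσB : 0 < σB)
    (hvar : sTil ηA σA < sTil ηB σB)
    (hθt : pA * (1 - gcdf ((θt - μA) / sTil ηA σA))
        + (1 - pA) * (1 - gcdf ((θt - μB) / sTil ηB σB)) = α) :
    1 - gcdf ((θt - μA) / sTil ηA σA) < 1 - gcdf ((θt - μB) / sTil ηB σB)
      ↔ α < gcdf ((μA - μB) / (sTil ηA σA - sTil ηB σB)) := by

  set sA := sTil ηA σA with hsAdef
  set sB := sTil ηB σB with hsBdef
  have hsA : 0 < sA := sTil_pos hηA hσA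
  have hsB : 0 < sB := sTil_pos hηB hσB
  have hd : 0 < sB - sA := sub_pos.2 hvar
  set c := (μA - μB) / (sB - sA) with hc
  set θs := (sB * μA - sA * μB) / (sB - sA) with hθs
  have hA' : (θs - μA) / sA = c := by
    rw [hθs, hc]; field_simp; ring
  have hB' : (θs - μB) / sB = c := by
    rw [hθs, hc]; field_simp; ring
  have hRHS : gcdf ((μA - μB) / (sA - sB)) = 1 - gcdf c := by
    rw [show (μA - μB) / (sA - sB) = -c from by
      rw [hc, show sA - sB = -(sB - sA) by ring, div_neg], gcdf_neg]
  have hp1 : (0:ℝ) < pA := hpA.1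
  have hp2 : (0:ℝ) < 1 - pA := by linarith [hpA.2]
  have hanti : StrictAnti (fun θ => pA * (1 - gcdf ((θ - μA) / sA))
      + (1 - pA) * (1 - gcdf ((θ - μB) / sB))) := by
    intro x y hxy
    have h1 : gcdf ((x - μA) / sA) < gcdf ((y - μA) / sA) :=
      gcdf_strictMono ((div_lt_div_iff_of_pos_right hsA).2 (by linarith))
    have h2 : gcdf ((x - μB) / sB) < gcdf ((y - μB) / sB) :=
      gcdf_strictMono ((div_lt_div_iff_of_pos_right hsB).2 (by linarith))
    simp only
    nlinarith
  have hfθs : pA * (1 - gcdf ((θs - μA) / sA))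
      + (1 - pA) * (1 - gcdf ((θs - μB) / sB)) = 1 - gcdf c := by
    rw [hA', hB']; ring
  rw [hRHS, ← hθt, ← hfθs]
  rw [show (pA * (1 - gcdf ((θt - μA) / sA)) + (1 - pA) * (1 - gcdf ((θt - μB) / sB)) <
      pA * (1 - gcdf ((θs - μA) / sA)) + (1 - pA) * (1 - gcdf ((θs - μB) / sB))) ↔ θs < θt
    from hanti.lt_iff_gt]
  have key : (θt - μB) / sB < (θt - μA) / sA ↔ θs < θt := by
    rw [div_lt_div_iff₀ hsB hsA, hθs, div_lt_iff₀ hd]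
    constructor <;> intro <;> nlinarith
  constructor
  · intro h
    exact key.1 (gcdf_strictMono.lt_iff_lt.1 (by linarith))
  · intro h
    have := gcdf_strictMono (key.2 h)
    linarith
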